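/- A von Neumann algebra M (a unital *-subalgebra of the bounded operators on a complex Hilbert space equal to its double commutant) has the countable chain condition if and only if its center is σ-finite, i.e., the center of M admits no uncountable family of pairwise orthogonal nonzero projections. -/

import Mathlib

noncomputable section StmtAux

open Submodule ContinuousLinearMap

variable {H : Type*} [NormedAddCommGroup H] [InnerProductSpace ℂ H] [CompleteSpace H]

local notation "⟪" x ", " y "⟫" => @inner ℂ _ _ x y

/-- generating set for the central support subspace -/
def cccGen (M : VonNeumannAlgebra H) (b : H →L[ℂ] H) : Set H :=
  {v | ∃ x ∈ M, ∃ y ∈ M, ∃ ξ : H, v = (x * b * y) ξ}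

def cccK (M : VonNeumannAlgebra H) (b : H →L[ℂ] H) : Submodule ℂ H :=
  (Submodule.span ℂ (cccGen M b)).topologicalClosure

lemma isClosed_cccK (M : VonNeumannAlgebra H) (b : H →L[ℂ] H) :
    IsClosed (cccK M b : Set H) :=
  Submodule.isClosed_topologicalClosure _

instance (M : VonNeumannAlgebra H) (b : H →L[ℂ] H) : CompleteSpace (cccK M b) :=
  (isClosed_cccK M b).completeSpace_coe

def cccP (M : VonNeumannAlgebra H) (b : H →L[ℂ] H) : H →L[ℂ] H :=
  (cccK M b).subtypeL ∘L orthogonalProjection (cccK M b)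

lemma cccP_apply_mem (M : VonNeumannAlgebra H) (b : H →L[ℂ] H) (ξ : H) :
    cccP M b ξ ∈ cccK M b := by
  simpa [cccP] using (orthogonalProjection (cccK M b) ξ).2

lemma cccP_eq_self (M : VonNeumannAlgebra H) (b : H →L[ℂ] H) {ξ : H} (h : ξ ∈ cccK M b) :
    cccP M b ξ = ξ :=
  Submodule.starProjection_eq_self_iff.mpr h

lemma cccP_eq_zero (M : VonNeumannAlgebra H) (b : H →L[ℂ] H) {ξ : H}
    (h : ξ ∈ (cccK M b)ᗮ) : cccP M b ξ = 0 := by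
  have := orthogonalProjection_mem_subspace_orthogonalComplement_eq_zero h
  simp [cccP, this]

lemma cccP_idem (M : VonNeumannAlgebra H) (b : H →L[ℂ] H) :
    cccP M b * cccP M b = cccP M b := by
  ext ξ
  exact cccP_eq_self M b (cccP_apply_mem M b ξ)

lemma cccP_selfAdjoint (M : VonNeumannAlgebra H) (b : H →L[ℂ] H) :
    IsSelfAdjoint (cccP M b) :=
  isSelfAdjoint_starProjection (cccK M b)

lemma cccK_invariant (M : VonNeumannAlgebra H) (b : H →L[ℂ] H) (f : H →L[ℂ] H)
    (h : ∀ v ∈ cccGen M b, f v ∈ Submodule.span ℂ (cccGen M b)) :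
    ∀ w ∈ cccK M b, f w ∈ cccK M b := by
  have h1 : Submodule.span ℂ (cccGen M b) ≤ (cccK M b).comap (f : H →ₗ[ℂ] H) := by
    rw [← Submodule.map_le_iff_le_comap, Submodule.map_span]
    refine Submodule.span_le.2 ?_
    rintro _ ⟨v, hv, rfl⟩
    exact Submodule.le_topologicalClosure _ (h v hv)
  have h2 : IsClosed (((cccK M b).comap (f : H →ₗ[ℂ] H) : Submodule ℂ H) : Set H) :=
    (isClosed_cccK M b).preimage f.continuous
  exact fun w hw => Submodule.topologicalClosure_minimal _ h1 h2 hw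

/-- Projection onto an invariant (under `g` and `star g`) subspace commutes with `g`. -/
lemma cccP_comm (M : VonNeumannAlgebra H) (b : H →L[ℂ] H) (g : H →L[ℂ] H)
    (hg : ∀ v ∈ cccGen M b, g v ∈ Submodule.span ℂ (cccGen M b))
    (hg' : ∀ v ∈ cccGen M b, (star g) v ∈ Submodule.span ℂ (cccGen M b)) :
    g * cccP M b = cccP M b * g := by
  have hK : ∀ w ∈ cccK M b, g w ∈ cccK M b := cccK_invariant M b g hg
  have hK' : ∀ w ∈ cccK M b, (star g) w ∈ cccK M b := cccK_invariant M b (star g) hg'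
  have hOrth : ∀ w ∈ (cccK M b)ᗮ, g w ∈ (cccK M b)ᗮ := by
    intro w hw
    rw [Submodule.mem_orthogonal]
    intro u hu
    have : ⟪u, g w⟫ = ⟪(star g) u, w⟫ := by
      rw [ContinuousLinearMap.star_eq_adjoint, ContinuousLinearMap.adjoint_inner_left]
    rw [this]
    exact (Submodule.mem_orthogonal _ _).1 hw _ (hK' u hu)
  ext ξ
  have hdecomp : ξ - cccP M b ξ ∈ (cccK M b)ᗮ :=
    Submodule.sub_starProjection_mem_orthogonal (K := cccK M b) ξ
  have e1 : g ξ = g (cccP M b ξ) + g (ξ - cccP M b ξ) := by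
    rw [← map_add]
    congr 1
    abel
  simp only [ContinuousLinearMap.mul_apply]
  rw [e1, map_add, cccP_eq_self M b (hK _ (cccP_apply_mem M b ξ)),
    cccP_eq_zero M b (hOrth _ hdecomp), add_zero]


lemma cccGen_maps (M : VonNeumannAlgebra H) (b : H →L[ℂ] H) (hb : b ∈ M)
    (g : H →L[ℂ] H) (hg : ∀ m ∈ M, g * m = m * g) :
    ∀ v ∈ cccGen M b, g v ∈ Submodule.span ℂ (cccGen M b) := by
  rintro _ ⟨x, hx, y, hy, ξ, rfl⟩
  have hmem : x * b * y ∈ M := mul_mem (mul_mem hx hb) hy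
  have : g ((x * b * y) ξ) = (x * b * y) (g ξ) := by
    have := hg _ hmem
    calc g ((x * b * y) ξ) = (g * (x * b * y)) ξ := rfl
    _ = ((x * b * y) * g) ξ := by rw [this]
    _ = (x * b * y) (g ξ) := rfl
  rw [this]
  exact Submodule.subset_span ⟨x, hx, y, hy, g ξ, rfl⟩

lemma star_mem_centralizer' (M : VonNeumannAlgebra H) (g : H →L[ℂ] H)
    (hg : g ∈ Set.centralizer (M : Set (H →L[ℂ] H))) :
    star g ∈ Set.centralizer (M : Set (H →L[ℂ] H)) := by
  intro m hm
  have h1 : star m * g = g * star m := hg (star m) (star_mem hm)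
  calc m * star g = star (g * star m) := by rw [star_mul, star_star]
  _ = star (star m * g) := by rw [h1]
  _ = star g * m := by rw [star_mul, star_star]

/-- The projection lies in the double commutant, hence in `M`. -/
lemma cccP_mem (M : VonNeumannAlgebra H) (b : H →L[ℂ] H) (hb : b ∈ M) :
    cccP M b ∈ M := by
  have : cccP M b ∈ Set.centralizer (Set.centralizer (M : Set (H →L[ℂ] H))) := by
    intro g hg
    have hg1 : ∀ m ∈ M, g * m = m * g := fun m hm => (hg m hm).symm
    have hg2 : ∀ m ∈ M, star g * m = m * star g :=
      fun m hm => (star_mem_centralizer' M g hg m hm).symm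
    exact cccP_comm M b g (cccGen_maps M b hb g hg1) (cccGen_maps M b hb (star g) hg2)
  rwa [M.centralizer_centralizer] at this

/-- The projection is central. -/
lemma cccP_comm_mem (M : VonNeumannAlgebra H) (b : H →L[ℂ] H) (hb : b ∈ M) :
    ∀ m ∈ M, m * cccP M b = cccP M b * m := by
  intro m hm
  have key : ∀ g, g ∈ M → ∀ v ∈ cccGen M b, g v ∈ Submodule.span ℂ (cccGen M b) := by
    rintro g hgM _ ⟨x, hx, y, hy, ξ, rfl⟩
    have : g ((x * b * y) ξ) = ((g * x) * b * y) ξ := by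
      simp only [ContinuousLinearMap.mul_apply]
    rw [this]
    exact Submodule.subset_span ⟨g * x, mul_mem hgM hx, y, hy, ξ, rfl⟩
  exact cccP_comm M b m (key m hm) (key (star m) (star_mem hm))

lemma cccP_ne_zero (M : VonNeumannAlgebra H) (b : H →L[ℂ] H) (hb0 : b ≠ 0) :
    cccP M b ≠ 0 := by
  obtain ⟨ξ, hξ⟩ : ∃ ξ, b ξ ≠ 0 := by
    by_contra h
    push_neg at h
    exact hb0 (ContinuousLinearMap.ext fun ξ => by simp [h ξ])
  have hmem : b ξ ∈ cccK M b := by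
    refine Submodule.le_topologicalClosure _ (Submodule.subset_span ?_)
    exact ⟨1, one_mem M, 1, one_mem M, ξ, by simp⟩
  intro h
  apply hξ
  have := cccP_eq_self M b hmem
  rw [h] at this
  simpa using this.symm

lemma cccP_mul_cccP (M : VonNeumannAlgebra H) (b c : H →L[ℂ] H)
    (hbs : star b = b) (h : ∀ m ∈ M, b * m * c = 0) :
    cccP M b * cccP M c = 0 := by
  have horth : cccK M c ≤ (cccK M b)ᗮ := by
    refine Submodule.topologicalClosure_minimal _ (Submodule.span_le.2 ?_)
      (cccK M b).isClosed_orthogonal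
    rintro _ ⟨u, hu, w, hw, η, rfl⟩
    rw [SetLike.mem_coe, Submodule.mem_orthogonal']
    intro u' hu'
    have hker : cccK M b ≤ (innerSL ℂ ((u * c * w) η)).ker := by
      refine Submodule.topologicalClosure_minimal _ (Submodule.span_le.2 ?_)
        (ContinuousLinearMap.isClosed_ker _)
      rintro _ ⟨x, hx, y, hy, ξ, rfl⟩
      rw [SetLike.mem_coe, LinearMap.mem_ker]
      have hmid : star c * ((star u * x) * b) = 0 := by
        have h1 : b * (star x * u) * c = 0 := h _ (mul_mem (star_mem hx) hu)
        have h2 := congrArg star h1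
        simp only [star_mul, star_zero, star_star, hbs] at h2
        exact h2
      have key0 : star (u * c * w) * (x * b * y) =
          (star w * (star c * ((star u * x) * b))) * y := by
        simp only [star_mul, mul_assoc]
      have key1 : star (u * c * w) * (x * b * y) = 0 := by
        rw [key0, hmid, mul_zero, zero_mul]
      have key2 : (innerSL ℂ ((u * c * w) η)) ((x * b * y) ξ) = 0 := by
        have e1 : ⟪(u * c * w) η, (x * b * y) ξ⟫
            = ⟪η, (ContinuousLinearMap.adjoint (u * c * w)) ((x * b * y) ξ)⟫ :=
          (ContinuousLinearMap.adjoint_inner_right _ _ _).symm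
        have e2 : (ContinuousLinearMap.adjoint (u * c * w)) ((x * b * y) ξ)
            = (star (u * c * w) * (x * b * y)) ξ := by
          rw [← ContinuousLinearMap.star_eq_adjoint]
          rfl
        simp only [innerSL_apply_apply, e1, e2, key1]
        simp
      exact key2
    have := hker hu'
    rw [LinearMap.mem_ker] at this
    simpa using this
  ext ξ
  simp only [ContinuousLinearMap.mul_apply, ContinuousLinearMap.zero_apply]
  exact cccP_eq_zero M b (horth (cccP_apply_mem M c ξ))

end StmtAux

/-- A C*-algebra has the countable chain condition (CCC) if every family of pairwise
orthogonal nonzero closed two-sided ideals is countable; two closed two-sided ideals are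
orthogonal if their intersection is the zero ideal.  (Only the ring and topological
structure of the algebra are needed to state this.) -/
def CStarCCC (A : Type*) [NonUnitalNonAssocRing A] [TopologicalSpace A] : Prop :=
  ∀ 𝒮 : Set (TwoSidedIdeal A), (∀ I ∈ 𝒮, IsClosed (I : Set A)) →
    (∀ I ∈ 𝒮, I ≠ ⊥) → (𝒮.Pairwise fun I J => I ⊓ J = ⊥) → 𝒮.Countable

/-- A von Neumann algebra `M` (a unital *-subalgebra of bounded operators on a complex
Hilbert space equal to its double commutant) has the countable chain condition if and
only if its center is σ-finite, i.e. the center of `M` admits no uncountable family of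
pairwise orthogonal nonzero projections. -/
theorem stmt_2 {H : Type*} [NormedAddCommGroup H] [InnerProductSpace ℂ H]
    [CompleteSpace H] (M : VonNeumannAlgebra H) :
    CStarCCC M ↔
      ¬∃ P : Set M, ¬P.Countable ∧
        (∀ p ∈ P, p ∈ Set.center M ∧ p ≠ 0 ∧ IsSelfAdjoint p ∧ IsIdempotentElem p) ∧
        P.Pairwise fun p q => p * q = 0 := by
  constructor
  · -- CCC implies the center is σ-finite
    intro hccc
    rintro ⟨P, hPunc, hPprop, hPpair⟩
    have hcenter : ∀ p : M, p ∈ Set.center (M : Type _) → ∀ g : M, g * p = p * g :=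
      fun p hp g => Semigroup.mem_center_iff.1 hp g
    let F : P → TwoSidedIdeal M := fun p =>
      TwoSidedIdeal.mk' {x : M | p.1 * x = x}
        (by simp)
        (fun {x y} hx hy => by
          simp only [Set.mem_setOf_eq] at *
          rw [mul_add, hx, hy])
        (fun {x} hx => by
          simp only [Set.mem_setOf_eq] at *
          rw [mul_neg, hx])
        (fun {x y} hy => by
          simp only [Set.mem_setOf_eq] at *
          have hc := hcenter p.1 (hPprop p.1 p.2).1 x
          rw [← mul_assoc, ← hc, mul_assoc, hy])
        (fun {x y} hx => by
          simp only [Set.mem_setOf_eq] at *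
          rw [← mul_assoc, hx])
    have hFmem : ∀ (p : P) (x : M), x ∈ F p ↔ p.1 * x = x := fun p x =>
      TwoSidedIdeal.mem_mk' _ _ _ _ _ _ x
    have hself : ∀ p : P, (p : M) ∈ F p := fun p =>
      (hFmem p p.1).2 (hPprop p.1 p.2).2.2.2
    have hFinj : Function.Injective F := by
      intro p q h
      have h1 : (q : M) ∈ F p := h ▸ hself q
      have h2 : (p : M) ∈ F q := h.symm ▸ hself p
      rw [hFmem] at h1 h2
      have hc := hcenter p.1 (hPprop p.1 p.2).1 q.1
      apply Subtype.ext
      calc (p : M) = q.1 * p.1 := h2.symm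
        _ = p.1 * q.1 := hc
        _ = q.1 := h1
    have hcl : ∀ I ∈ Set.range F, IsClosed (I : Set M) := by
      rintro _ ⟨p, rfl⟩
      have hset : ((F p : TwoSidedIdeal M) : Set M)
          = Subtype.val ⁻¹' {y : H →L[ℂ] H | (p.1 : H →L[ℂ] H) * y = y} := by
        ext x
        rw [SetLike.mem_coe, hFmem]
        constructor
        · intro hx
          simpa [Subtype.ext_iff] using hx
        · intro hx
          exact Subtype.ext (by simpa using hx)
      rw [hset]
      refine IsClosed.preimage continuous_subtype_val ?_
      have : {y : H →L[ℂ] H | (p.1 : H →L[ℂ] H) * y = y}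
          = (fun y : H →L[ℂ] H => (p.1 : H →L[ℂ] H) * y - y) ⁻¹' {0} := by
        ext y
        simp [sub_eq_zero]
      rw [this]
      exact IsClosed.preimage ((continuous_const.mul continuous_id).sub continuous_id)
        isClosed_singleton
    have hnz : ∀ I ∈ Set.range F, I ≠ ⊥ := by
      rintro _ ⟨p, rfl⟩ hbot
      have := hself p
      rw [hbot, TwoSidedIdeal.mem_bot] at this
      exact (hPprop p.1 p.2).2.1 this
    have hpw : (Set.range F).Pairwise fun I J => I ⊓ J = ⊥ := by
      rintro _ ⟨p, rfl⟩ _ ⟨q, rfl⟩ hne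
      have hpq1 : (p : M) ≠ (q : M) := by
        intro h
        exact hne (congrArg F (Subtype.ext h))
      have hz := hPpair p.2 q.2 hpq1
      rw [eq_bot_iff]
      intro x hx
      rw [TwoSidedIdeal.mem_inf] at hx
      obtain ⟨h1, h2⟩ := hx
      rw [hFmem] at h1 h2
      rw [TwoSidedIdeal.mem_bot]
      calc x = p.1 * x := h1.symm
        _ = p.1 * (q.1 * x) := by rw [h2]
        _ = p.1 * q.1 * x := (mul_assoc _ _ _).symm
        _ = 0 := by rw [hz, zero_mul]
    have hcount := hccc (Set.range F) hcl hnz hpw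
    haveI := hcount.to_subtype
    have hGinj : Function.Injective
        (fun p : P => (⟨F p, Set.mem_range_self p⟩ : Set.range F)) := by
      intro p q h
      exact hFinj (Subtype.ext_iff.1 h)
    haveI : Countable P := hGinj.countable
    exact hPunc (Set.countable_coe_iff.2 this)
  · -- σ-finite center implies CCC
    intro hσ 𝒮 hcl hne hpair
    by_contra hunc
    have hex : ∀ I : 𝒮, ∃ x : M, x ∈ (I : TwoSidedIdeal M) ∧ x ≠ 0 := by
      intro I
      by_contra h
      push_neg at h
      refine hne I I.2 (SetLike.ext fun x => ?_)
      rw [TwoSidedIdeal.mem_bot]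
      exact ⟨fun hx => h x hx, fun hx => hx ▸ TwoSidedIdeal.zero_mem _⟩
    choose a haI ha0 using hex
    set b : 𝒮 → M := fun I => a I * star (a I) with hbdef
    have hbI : ∀ I : 𝒮, b I ∈ (I : TwoSidedIdeal M) := fun I =>
      TwoSidedIdeal.mul_mem_right _ _ _ (haI I)
    have hbcoe : ∀ I, ((b I : M) : H →L[ℂ] H)
        = (a I : H →L[ℂ] H) * star (a I : H →L[ℂ] H) := fun I => rfl
    have hb0 : ∀ I, ((b I : M) : H →L[ℂ] H) ≠ 0 := by
      intro I h
      rw [hbcoe] at h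
      have := (CStarRing.mul_star_self_eq_zero_iff _).1 h
      exact ha0 I (Subtype.ext (by simpa using this))
    have hbs : ∀ I, star ((b I : M) : H →L[ℂ] H) = ((b I : M) : H →L[ℂ] H) := by
      intro I
      rw [hbcoe, star_mul, star_star]
    let z : 𝒮 → M := fun I => ⟨cccP M ((b I : M) : H →L[ℂ] H), cccP_mem M _ (b I).2⟩
    have hzne : ∀ I, z I ≠ 0 := by
      intro I h
      exact cccP_ne_zero M _ (hb0 I) (by simpa [z, Subtype.ext_iff] using h)
    have horth : ∀ I J : 𝒮, I ≠ J →
        ((z I : M) : H →L[ℂ] H) * ((z J : M) : H →L[ℂ] H) = 0 := by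
      intro I J hIJ
      apply cccP_mul_cccP M _ _ (hbs I)
      intro m hm
      have hmem : b I * ⟨m, hm⟩ * b J ∈ (I : TwoSidedIdeal M) ⊓ (J : TwoSidedIdeal M) :=
        (TwoSidedIdeal.mem_inf _).2
          ⟨TwoSidedIdeal.mul_mem_right _ _ _ (TwoSidedIdeal.mul_mem_right _ _ _ (hbI I)),
           TwoSidedIdeal.mul_mem_left _ _ _ (hbI J)⟩
      rw [hpair I.2 J.2 (fun h => hIJ (Subtype.ext h)), TwoSidedIdeal.mem_bot] at hmem
      calc ((b I : M) : H →L[ℂ] H) * m * ((b J : M) : H →L[ℂ] H)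
          = ((b I * ⟨m, hm⟩ * b J : M) : H →L[ℂ] H) := rfl
        _ = 0 := by rw [hmem]; rfl
    have hzinj : Function.Injective z := by
      intro I J h
      by_contra hIJ
      have h0 := horth I J hIJ
      rw [h] at h0
      have hid : ((z J : M) : H →L[ℂ] H) * ((z J : M) : H →L[ℂ] H)
          = ((z J : M) : H →L[ℂ] H) := cccP_idem M _
      rw [hid] at h0
      exact hzne J (Subtype.ext h0)
    apply hσ
    refine ⟨Set.range z, ?_, ?_, ?_⟩
    · intro hc
      apply hunc
      haveI := hc.to_subtype
      have hG : Function.Injective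
          (fun I : 𝒮 => (⟨z I, Set.mem_range_self I⟩ : Set.range z)) := by
        intro I J h
        exact hzinj (Subtype.ext_iff.1 h)
      haveI : Countable 𝒮 := hG.countable
      exact Set.countable_coe_iff.2 this
    · rintro _ ⟨I, rfl⟩
      refine ⟨?_, hzne I, ?_, ?_⟩
      · rw [Semigroup.mem_center_iff]
        intro g
        exact Subtype.ext (cccP_comm_mem M _ (b I).2 (g : H →L[ℂ] H) g.2)
      · exact Subtype.ext (cccP_selfAdjoint M _)
      · exact Subtype.ext (cccP_idem M _)
    · rintro _ ⟨I, rfl⟩ _ ⟨J, rfl⟩ hne'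
      have hIJ : I ≠ J := by
        intro h
        exact hne' (by rw [h])
      exact Subtype.ext (horth I J hIJ)
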